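/- For every natural number n and every Boolean function φ : (Fin n → Bool) → Bool, the (0ⁿ, 0ⁿ) entry of the matrix product H_n * D_φ * H_n equals 1 - 2 * #φ / 2^n, where #φ is the number of satisfying assignments of φ. (This is the paper's computation that the first matrix entry of the Hadamard-conjugated phase oracle circuit equals 1 - #φ/2^{n-1}.) -/

import Mathlib

open Finset

/-- The `n`-qubit Walsh–Hadamard matrix. -/
noncomputable def walshHadamard (n : ℕ) : Matrix (Fin n → Bool) (Fin n → Bool) ℝ :=
  fun x y =>
    (-1 : ℝ) ^ (Finset.univ.filter (fun i : Fin n => x i = true ∧ y i = true)).card /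
      Real.sqrt (2 ^ n)

/-- The phase-oracle matrix of `φ`: the diagonal matrix with entries `(-1)^{φ(x)}`. -/
def phaseOracle (n : ℕ) (φ : (Fin n → Bool) → Bool) :
    Matrix (Fin n → Bool) (Fin n → Bool) ℝ :=
  Matrix.diagonal (fun x => (-1 : ℝ) ^ (if φ x then 1 else 0))

lemma wh_zero (n : ℕ) (x : Fin n → Bool) :
    walshHadamard n (fun _ => false) x = 1 / Real.sqrt (2 ^ n) := by
  unfold walshHadamard
  simp

lemma wh_zero' (n : ℕ) (x : Fin n → Bool) :
    walshHadamard n x (fun _ => false) = 1 / Real.sqrt (2 ^ n) := by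
  unfold walshHadamard
  simp

/-- The `(0ⁿ, 0ⁿ)` entry of the Hadamard-conjugated phase oracle circuit equals
`1 - 2 * #φ / 2^n = 1 - #φ / 2^(n-1)`, where `#φ` is the number of satisfying
assignments of `φ`. -/
theorem hadamard_phaseOracle_hadamard_entry (n : ℕ) (φ : (Fin n → Bool) → Bool) :
    (walshHadamard n * phaseOracle n φ * walshHadamard n)
        (fun _ => false) (fun _ => false) =
      1 - 2 * (Fintype.card {x : Fin n → Bool // φ x = true} : ℝ) / 2 ^ n := by
  have hs : Real.sqrt (2 ^ n) * Real.sqrt (2 ^ n) = 2 ^ n := by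
    rw [← Real.sqrt_mul_self (by positivity : (0:ℝ) ≤ 2 ^ n)] at *
    ring_nf
    rw [Real.sq_sqrt (by positivity)]
  have hpos : (0:ℝ) < Real.sqrt (2 ^ n) := Real.sqrt_pos.mpr (by positivity)
  rw [Matrix.mul_apply]
  have : ∀ y : Fin n → Bool,
      (walshHadamard n * phaseOracle n φ) (fun _ => false) y * walshHadamard n y (fun _ => false)
      = (-1 : ℝ) ^ (if φ y then 1 else 0) / (2 ^ n) := by
    intro y
    rw [Matrix.mul_apply]
    simp only [phaseOracle, Matrix.diagonal_apply]
    rw [Finset.sum_eq_single y]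
    · rw [wh_zero, wh_zero']
      simp only [if_pos rfl]
      field_simp
      rw [if_pos trivial, Real.sq_sqrt (by positivity)]
    · intro b _ hb; simp [hb]
    · simp
  rw [Finset.sum_congr rfl (fun y _ => this y)]
  have hcount : (Finset.univ.filter (fun x : Fin n → Bool => φ x = true)).card
      = Fintype.card {x : Fin n → Bool // φ x = true} := (Fintype.card_subtype _).symm
  rw [← Finset.sum_div]
  have hsum : ∑ y : Fin n → Bool, (-1 : ℝ) ^ (if φ y then 1 else 0)
      = 2 ^ n - 2 * (Fintype.card {x : Fin n → Bool // φ x = true} : ℝ) := by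
    rw [← Finset.sum_filter_add_sum_filter_not Finset.univ (fun y => φ y = true)]
    have h1 : ∀ y ∈ Finset.univ.filter (fun y : Fin n → Bool => φ y = true),
        (-1 : ℝ) ^ (if φ y then 1 else 0) = -1 := by
      intro y hy; simp only [Finset.mem_filter] at hy; simp [hy.2]
    have h2 : ∀ y ∈ Finset.univ.filter (fun y : Fin n → Bool => ¬ φ y = true),
        (-1 : ℝ) ^ (if φ y then 1 else 0) = 1 := by
      intro y hy; simp only [Finset.mem_filter] at hy; simp [hy.2]
    rw [Finset.sum_congr rfl h1, Finset.sum_congr rfl h2, Finset.sum_const, Finset.sum_const]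
    rw [Finset.filter_not, Finset.card_sdiff_of_subset (Finset.filter_subset _ _), hcount]
    have hle : Fintype.card {x : Fin n → Bool // φ x = true} ≤ 2 ^ n := by
      rw [← hcount]
      calc _ ≤ Finset.univ.card := Finset.card_filter_le _ _
        _ = 2 ^ n := by simp [Fintype.card_fun]
    simp only [Finset.card_univ, Fintype.card_fun, Fintype.card_bool, Fintype.card_fin] at *
    simp only [nsmul_eq_mul, mul_neg_one, mul_one]
    rw [Nat.cast_sub hle]
    push_cast
    ring
  rw [hsum]
  field_simp
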